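/- Let q1, q2 be quadratic forms on ℚ^4 such that: (i) for every prime p there exists a nonzero vector v ∈ ℚ_p^4 with q1(v) = q2(v) = 0 (after base change to ℚ_p), (ii) there exists a nonzero vector v ∈ ℝ^4 with q1(v) = q2(v) = 0 (after base change to ℝ), and (iii) there is no nonzero vector v ∈ ℚ^4 with q1(v) = q2(v) = 0. Define Q1, Q2 on coordinates x1,…,x7 by Q1 = q1(x1,…,x4) + x5·x6 and Q2 = q2(x1,…,x4) + x5·x7. Then for every prime p there is a 3-dimensional ℚ_p-linear subspace of ℚ_p^7 on which Q1 and Q2 both vanish identically, and there is a 3-dimensional ℝ-linear subspace of ℝ^7 on which Q1 and Q2 both vanish identically, but there is no 3-dimensional ℚ-linear subspace of ℚ^7 on which Q1 and Q2 both vanish identically. (Hence the local-global principle for 3-dimensional vanishing subspaces can fail when no member of the pencil is nonsingular.) -/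

import Mathlib

/-- The base change of a quadratic form on `K^m` along a field homomorphism `σ : K →+* L`,
obtained by applying `σ` entrywise to the Gram matrix of the form. -/
noncomputable def QuadraticForm.mapBase {K L : Type*} [Field K] [Field L] [Invertible (2 : K)]
    {m : ℕ} (σ : K →+* L) (q : QuadraticForm K (Fin m → K)) :
    QuadraticForm L (Fin m → L) :=
  ((QuadraticMap.toMatrix' q).map σ).toQuadraticMap'

/-- Given a quadratic form `q1` on `F^4`, the quadratic form
`Q1(x1,…,x7) = q1(x1,x2,x3,x4) + x5·x6` on `F^7` (indices are 0-based below). -/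
noncomputable def amerFormFst7 {F : Type*} [Field F] (q1 : QuadraticForm F (Fin 4 → F)) :
    QuadraticForm F (Fin 7 → F) :=
  q1.comp (LinearMap.funLeft F F (Fin.castLE (by omega))) +
    QuadraticMap.proj (R := F) (A := F) (4 : Fin 7) 5

/-- Given a quadratic form `q2` on `F^4`, the quadratic form
`Q2(x1,…,x7) = q2(x1,x2,x3,x4) + x5·x7` on `F^7` (indices are 0-based below). -/
noncomputable def amerFormSnd7 {F : Type*} [Field F] (q2 : QuadraticForm F (Fin 4 → F)) :
    QuadraticForm F (Fin 7 → F) :=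
  q2.comp (LinearMap.funLeft F F (Fin.castLE (by omega))) +
    QuadraticMap.proj (R := F) (A := F) (4 : Fin 7) 6

/-- The quadratic forms `f` and `g` both vanish identically on some `d`-dimensional
linear subspace of `L^m`. -/
def BothVanishOnSubspace {L : Type*} [Field L] {m : ℕ}
    (f g : QuadraticForm L (Fin m → L)) (d : ℕ) : Prop :=
  ∃ W : Submodule L (Fin m → L), Module.finrank L ↥W = d ∧ ∀ x ∈ W, f x = 0 ∧ g x = 0

section Aux

open Matrix

variable {K L : Type*} [Field K] [Field L] [Invertible (2 : K)] {m n : ℕ}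

lemma mapBase_apply (σ : K →+* L) (q : QuadraticForm K (Fin m → K)) (x : Fin m → L) :
    q.mapBase σ x = ∑ i, ∑ j, x i * (x j * σ (QuadraticForm.QuadraticMap.toMatrix' q i j)) := by
  simp [QuadraticForm.mapBase, Matrix.toQuadraticMap', Matrix.toQuadraticForm',
    LinearMap.BilinMap.toQuadraticMap_apply, Matrix.toLinearMap₂'_apply, smul_eq_mul]

lemma toMatrix'_add (Q Q' : QuadraticForm K (Fin m → K)) :
    QuadraticForm.QuadraticMap.toMatrix' (Q + Q') = QuadraticForm.QuadraticMap.toMatrix' Q + QuadraticForm.QuadraticMap.toMatrix' Q' := by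
  simp [QuadraticForm.QuadraticMap.toMatrix', QuadraticForm.toMatrix', map_add]

lemma mapBase_add (σ : K →+* L) (Q Q' : QuadraticForm K (Fin m → K)) :
    (Q + Q').mapBase σ = Q.mapBase σ + Q'.mapBase σ := by
  ext x
  simp [mapBase_apply, toMatrix'_add, Matrix.add_apply, map_add, mul_add, Finset.sum_add_distrib]

lemma key_quad (M : Matrix (Fin m) (Fin m) L) (B : Matrix (Fin m) (Fin n) L) (x : Fin n → L) :
    (Bᵀ * M * B).toQuadraticMap' x = M.toQuadraticMap' (B *ᵥ x) := by
  simp only [Matrix.toQuadraticMap', Matrix.toQuadraticForm', LinearMap.BilinMap.toQuadraticMap_apply,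
    Matrix.toLinearMap₂'_apply', ← Matrix.mulVec_mulVec, Matrix.dotProduct_mulVec,
    Matrix.vecMul_transpose]

omit [Invertible (2:K)] in
lemma map_funLeft_matrix (σ : K →+* L) (g : Fin m → Fin n) :
    (LinearMap.toMatrix' (LinearMap.funLeft K K g)).map σ
      = LinearMap.toMatrix' (LinearMap.funLeft L L g) := by
  ext i j
  simp [LinearMap.toMatrix'_apply, LinearMap.funLeft_apply, Pi.single_apply, apply_ite σ]

lemma mapBase_comp (σ : K →+* L) (q : QuadraticForm K (Fin m → K)) (g : Fin m → Fin n) :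
    QuadraticForm.mapBase σ (q.comp (LinearMap.funLeft K K g))
      = (QuadraticForm.mapBase σ q).comp (LinearMap.funLeft L L g) := by
  ext x
  rw [QuadraticForm.mapBase, QuadraticForm.QuadraticMap.toMatrix', QuadraticForm.toMatrix'_comp]
  rw [Matrix.map_mul, Matrix.map_mul, Matrix.transpose_map, map_funLeft_matrix]
  rw [key_quad]
  have h : (LinearMap.toMatrix' (LinearMap.funLeft L L g)) *ᵥ x = LinearMap.funLeft L L g x := by
    rw [← Matrix.toLin'_apply, Matrix.toLin'_toMatrix']
  rw [h]
  rfl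

lemma toMatrix'_proj (i j : Fin m) (k l : Fin m) :
    QuadraticForm.QuadraticMap.toMatrix' (QuadraticMap.proj (R := K) (A := K) i j) k l
      = ⅟(2:K) * ((if i = k then (1:K) else 0) * (if j = l then 1 else 0)
          + (if j = k then (1:K) else 0) * (if i = l then 1 else 0)) := by
  rw [QuadraticForm.QuadraticMap.toMatrix', QuadraticForm.toMatrix', LinearMap.toMatrix₂'_apply]
  simp only [QuadraticMap.proj, QuadraticMap.associated_linMulLin, LinearMap.smul_apply,
    LinearMap.add_apply, LinearMap.compl₁₂_apply, LinearMap.proj_apply, LinearMap.mul_apply',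
    smul_eq_mul, Pi.single_apply]

lemma mySum (x : Fin m → L) (a b : Fin m) (c : L) :
    ∑ k, ∑ l, x k * (x l * ((if a = k then c else 0) * (if b = l then 1 else 0)))
      = x a * x b * c := by
  simp [ite_mul, mul_ite, Finset.sum_ite_eq, mul_comm, mul_assoc, mul_left_comm]

lemma mapBase_proj (σ : K →+* L) (i j : Fin m) (hij : i ≠ j) :
    QuadraticForm.mapBase σ (QuadraticMap.proj (R := K) (A := K) i j)
      = QuadraticMap.proj (R := L) (A := L) i j := by
  ext x
  rw [mapBase_apply]
  have h2 : σ (⅟(2:K)) + σ (⅟(2:K)) = 1 := by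
    rw [← _root_.map_add, invOf_two_add_invOf_two, _root_.map_one]
  calc ∑ k, ∑ l, x k * (x l * σ (QuadraticForm.QuadraticMap.toMatrix' (QuadraticMap.proj (R := K) (A := K) i j) k l))
      = ∑ k, ∑ l, (x k * (x l * ((if i = k then σ (⅟(2:K)) else 0) * (if j = l then (1:L) else 0)))
          + x k * (x l * ((if j = k then σ (⅟(2:K)) else 0) * (if i = l then (1:L) else 0)))) := by
        refine Finset.sum_congr rfl fun k _ => Finset.sum_congr rfl fun l _ => ?_
        rw [toMatrix'_proj, _root_.map_mul, _root_.map_add, _root_.map_mul, _root_.map_mul]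
        split_ifs <;> simp_all
    _ = x i * x j * σ (⅟(2:K)) + x j * x i * σ (⅟(2:K)) := by
        simp only [Finset.sum_add_distrib]
        rw [mySum x i j (σ (⅟(2:K))), mySum x j i (σ (⅟(2:K)))]
    _ = x i * x j * (σ (⅟(2:K)) + σ (⅟(2:K))) := by ring
    _ = x i * x j := by rw [h2, mul_one]
    _ = QuadraticMap.proj (R := L) (A := L) i j x := by simp

lemma mapBase_amerFst (σ : K →+* L) (q : QuadraticForm K (Fin 4 → K)) :
    QuadraticForm.mapBase σ (amerFormFst7 q) = amerFormFst7 (QuadraticForm.mapBase σ q) := by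
  rw [amerFormFst7, mapBase_add, mapBase_comp, mapBase_proj σ 4 5 (by decide), amerFormFst7]

lemma mapBase_amerSnd (σ : K →+* L) (q : QuadraticForm K (Fin 4 → K)) :
    QuadraticForm.mapBase σ (amerFormSnd7 q) = amerFormSnd7 (QuadraticForm.mapBase σ q) := by
  rw [amerFormSnd7, mapBase_add, mapBase_comp, mapBase_proj σ 4 6 (by decide), amerFormSnd7]

variable {F : Type*} [Field F]

lemma amerFst_apply (q : QuadraticForm F (Fin 4 → F)) (x : Fin 7 → F) :
    amerFormFst7 q x = q (fun i => x (Fin.castLE (by omega) i)) + x 4 * x 5 := by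
  simp [amerFormFst7, LinearMap.funLeft_apply]
  rfl

lemma amerSnd_apply (q : QuadraticForm F (Fin 4 → F)) (x : Fin 7 → F) :
    amerFormSnd7 q x = q (fun i => x (Fin.castLE (by omega) i)) + x 4 * x 6 := by
  simp [amerFormSnd7, LinearMap.funLeft_apply]
  rfl

end Aux

section Main

variable {F : Type*} [Field F]

private def padV (v : Fin 4 → F) : Fin 7 → F :=
  fun k => if h : (k : ℕ) < 4 then v ⟨k, h⟩ else 0

private lemma padV_castLE (v : Fin 4 → F) (i : Fin 4) :
    padV v (Fin.castLE (by omega) i) = v i := by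
  rw [padV]
  rw [dif_pos (by simpa using i.isLt)]
  congr 1

private lemma padV_ge (v : Fin 4 → F) (k : Fin 7) (hk : 4 ≤ (k : ℕ)) :
    padV v k = 0 := dif_neg (by omega)

private lemma castLE_ne (i : Fin 4) (j : Fin 7) (hj : 4 ≤ (j : ℕ)) :
    Fin.castLE (show 4 ≤ 7 by omega) i ≠ j := by
  intro h
  have := congrArg Fin.val h
  rw [Fin.coe_castLE] at this
  omega

private lemma val45 : ((4 : Fin 7) : ℕ) = 4 ∧ ((5 : Fin 7) : ℕ) = 5 ∧ ((6 : Fin 7) : ℕ) = 6 := by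
  refine ⟨rfl, rfl, rfl⟩

lemma vanish_of_common_zero (f g : QuadraticForm F (Fin 4 → F))
    (v : Fin 4 → F) (hv : v ≠ 0) (hf : f v = 0) (hg : g v = 0) :
    BothVanishOnSubspace (amerFormFst7 f) (amerFormSnd7 g) 3 := by
  classical
  obtain ⟨i0, hi0⟩ : ∃ i, v i ≠ 0 := by
    by_contra h
    push_neg at h
    exact hv (funext h)
  set b : Fin 3 → (Fin 7 → F) :=
    ![padV v, Pi.single (5 : Fin 7) 1, Pi.single (6 : Fin 7) 1] with hb
  have heval : ∀ c : Fin 3 → F, ∀ k : Fin 7,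
      (∑ i, c i • b i) k = c 0 * padV v k + c 1 * (Pi.single (5 : Fin 7) (1:F) : Fin 7 → F) k
        + c 2 * (Pi.single (6 : Fin 7) (1:F) : Fin 7 → F) k := by
    intro c k
    rw [Fin.sum_univ_three]
    simp [hb, mul_comm]
  have hli : LinearIndependent F b := by
    rw [Fintype.linearIndependent_iff]
    intro c hc
    have h5 := congrFun hc 5
    have h6 := congrFun hc 6
    have h0 := congrFun hc (Fin.castLE (by omega) i0)
    rw [heval] at h5 h6 h0
    rw [padV_ge v 5 (by simp [val45.2.1])] at h5
    rw [padV_ge v 6 (by simp [val45.2.2])] at h6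
    rw [padV_castLE] at h0
    rw [Pi.single_eq_same, Pi.single_eq_of_ne (by decide : (5:Fin 7) ≠ 6)] at h5
    rw [Pi.single_eq_same, Pi.single_eq_of_ne (by decide : (6:Fin 7) ≠ 5)] at h6
    rw [Pi.single_eq_of_ne (castLE_ne i0 5 (by simp [val45.2.1])),
      Pi.single_eq_of_ne (castLE_ne i0 6 (by simp [val45.2.2]))] at h0
    simp only [Pi.zero_apply, mul_zero, mul_one, zero_add, add_zero, mul_zero] at h5 h6 h0
    have hc1 : c 1 = 0 := h5
    have hc2 : c 2 = 0 := h6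
    have hc0 : c 0 = 0 := by
      rcases mul_eq_zero.mp h0 with h | h
      · exact h
      · exact absurd h hi0
    intro i
    fin_cases i <;> assumption
  refine ⟨Submodule.span F (Set.range b), ?_, ?_⟩
  · rw [finrank_span_eq_card hli]
    simp
  · intro x hx
    rw [Submodule.mem_span_range_iff_exists_fun F] at hx
    obtain ⟨c, hc⟩ := hx
    subst hc
    have hx4 : (∑ i, c i • b i) 4 = 0 := by
      rw [heval, padV_ge v 4 (by simp [val45.1]),
        Pi.single_eq_of_ne (by decide : (4:Fin 7) ≠ 5),
        Pi.single_eq_of_ne (by decide : (4:Fin 7) ≠ 6)]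
      ring
    have hxcast : (fun i : Fin 4 => (∑ i, c i • b i) (Fin.castLE (by omega) i)) = c 0 • v := by
      funext i
      rw [heval, padV_castLE,
        Pi.single_eq_of_ne (castLE_ne i 5 (by simp [val45.2.1])),
        Pi.single_eq_of_ne (castLE_ne i 6 (by simp [val45.2.2]))]
      simp
    constructor
    · rw [amerFst_apply, hxcast, hx4, zero_mul, add_zero, QuadraticMap.map_smul, hf]
      simp
    · rw [amerSnd_apply, hxcast, hx4, zero_mul, add_zero, QuadraticMap.map_smul, hg]
      simp

lemma no_vanish (f g : QuadraticForm F (Fin 4 → F))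
    (hq : ¬ ∃ v : Fin 4 → F, v ≠ 0 ∧ f v = 0 ∧ g v = 0) :
    ¬ BothVanishOnSubspace (amerFormFst7 f) (amerFormSnd7 g) 3 := by
  rintro ⟨W, hW3, hvan⟩
  push_neg at hq
  have claim : ∀ x ∈ W, x 4 = 0 → ∀ k : Fin 7, (k : ℕ) ≤ 4 → x k = 0 := by
    intro x hx h4 k hk
    rcases Nat.lt_or_ge (k : ℕ) 4 with h | h
    · have hfx := (hvan x hx).1
      have hgx := (hvan x hx).2
      rw [amerFst_apply, h4, zero_mul, add_zero] at hfx
      rw [amerSnd_apply, h4, zero_mul, add_zero] at hgx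
      by_contra hne
      have hy : (fun i : Fin 4 => x (Fin.castLE (by omega) i)) ≠ 0 := by
        intro h0
        apply hne
        have := congrFun h0 ⟨(k : ℕ), h⟩
        simpa [Fin.ext_iff] using this
      exact hq _ hy hfx hgx
    · have hk4 : k = 4 := by
        apply Fin.ext
        rw [val45.1]
        omega
      rw [hk4]
      exact h4
  have hrank2 : ¬ Module.finrank F ↥W ≤ 2 := by
    rw [hW3]; omega
  -- there is z ∈ W with z 4 = 0 and z 5 ≠ 0
  have hz5 : ∃ z ∈ W, z 4 = 0 ∧ z 5 ≠ 0 := by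
    by_contra hcon
    push_neg at hcon
    have hinj : Function.Injective
        (LinearMap.prod
          ((LinearMap.proj (R := F) (φ := fun _ : Fin 7 => F) 4).comp W.subtype)
          ((LinearMap.proj (R := F) (φ := fun _ : Fin 7 => F) 6).comp W.subtype)) := by
      rw [← LinearMap.ker_eq_bot, LinearMap.ker_eq_bot']
      intro z hz
      rw [LinearMap.prod_apply, Prod.mk_eq_zero] at hz
      have h4 : ((z : Fin 7 → F)) 4 = 0 := hz.1
      have h6 : ((z : Fin 7 → F)) 6 = 0 := hz.2
      have h5 : ((z : Fin 7 → F)) 5 = 0 := hcon _ z.2 h4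
      apply Subtype.ext
      funext k
      rcases Nat.lt_or_ge (k : ℕ) 5 with h | h
      · exact claim _ z.2 h4 k (by omega)
      · rcases Nat.lt_or_ge (k : ℕ) 6 with h' | h'
        · have : k = 5 := by apply Fin.ext; rw [val45.2.1]; omega
          rw [this]; exact h5
        · have : k = 6 := by apply Fin.ext; rw [val45.2.2]; omega
          rw [this]; exact h6
    have hle := LinearMap.finrank_le_finrank_of_injective hinj
    rw [Module.finrank_prod, Module.finrank_self] at hle
    exact hrank2 hle
  -- there is w ∈ W with w 4 ≠ 0
  have hw4 : ∃ w ∈ W, w 4 ≠ 0 := by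
    by_contra hcon
    push_neg at hcon
    have hinj : Function.Injective
        (LinearMap.prod
          ((LinearMap.proj (R := F) (φ := fun _ : Fin 7 => F) 5).comp W.subtype)
          ((LinearMap.proj (R := F) (φ := fun _ : Fin 7 => F) 6).comp W.subtype)) := by
      rw [← LinearMap.ker_eq_bot, LinearMap.ker_eq_bot']
      intro z hz
      rw [LinearMap.prod_apply, Prod.mk_eq_zero] at hz
      have h5 : ((z : Fin 7 → F)) 5 = 0 := hz.1
      have h6 : ((z : Fin 7 → F)) 6 = 0 := hz.2
      have h4 : ((z : Fin 7 → F)) 4 = 0 := hcon _ z.2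
      apply Subtype.ext
      funext k
      rcases Nat.lt_or_ge (k : ℕ) 5 with h | h
      · exact claim _ z.2 h4 k (by omega)
      · rcases Nat.lt_or_ge (k : ℕ) 6 with h' | h'
        · have : k = 5 := by apply Fin.ext; rw [val45.2.1]; omega
          rw [this]; exact h5
        · have : k = 6 := by apply Fin.ext; rw [val45.2.2]; omega
          rw [this]; exact h6
    have hle := LinearMap.finrank_le_finrank_of_injective hinj
    rw [Module.finrank_prod, Module.finrank_self] at hle
    exact hrank2 hle
  obtain ⟨z, hzW, hz4, hz5⟩ := hz5
  obtain ⟨w, hwW, hw4⟩ := hw4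
  have hmem := W.add_mem hwW hzW
  have h1 := (hvan w hwW).1
  have h2 := (hvan _ hmem).1
  rw [amerFst_apply] at h1 h2
  have hcast : (fun i : Fin 4 => (w + z) (Fin.castLE (by omega) i))
      = fun i : Fin 4 => w (Fin.castLE (by omega) i) := by
    funext i
    have hz0 := claim z hzW hz4 (Fin.castLE (by omega) i) (by rw [Fin.coe_castLE]; omega)
    simp [hz0]
  rw [hcast] at h2
  have h4 : (w + z) 4 = w 4 := by simp [hz4]
  have h5 : (w + z) 5 = w 5 + z 5 := rfl
  rw [h4, h5] at h2
  have hzero : w 4 * z 5 = 0 := by linear_combination h2 - h1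
  rcases mul_eq_zero.mp hzero with h | h
  · exact hw4 h
  · exact hz5 h

end Main

/-- If `q1`, `q2` are quadratic forms on `ℚ^4` with a common nontrivial zero over every
`ℚ_p` and over `ℝ`, but with no common nontrivial zero over `ℚ`, then the forms
`Q1 = q1(x1,…,x4) + x5 x6` and `Q2 = q2(x1,…,x4) + x5 x7` on `7` variables vanish on a
common `3`-dimensional subspace over every `ℚ_p` and over `ℝ`, but not over `ℚ`: the
local-global principle fails for `3`-dimensional vanishing subspaces. -/
theorem amer_local_global_failure_seven (q1 q2 : QuadraticForm ℚ (Fin 4 → ℚ))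
    (hp : ∀ (p : ℕ) [Fact p.Prime], ∃ v : Fin 4 → ℚ_[p], v ≠ 0 ∧
      (q1.mapBase (algebraMap ℚ ℚ_[p])) v = 0 ∧ (q2.mapBase (algebraMap ℚ ℚ_[p])) v = 0)
    (hr : ∃ v : Fin 4 → ℝ, v ≠ 0 ∧
      (q1.mapBase (algebraMap ℚ ℝ)) v = 0 ∧ (q2.mapBase (algebraMap ℚ ℝ)) v = 0)
    (hq : ¬ ∃ v : Fin 4 → ℚ, v ≠ 0 ∧ q1 v = 0 ∧ q2 v = 0) :
    (∀ (p : ℕ) [Fact p.Prime],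
      BothVanishOnSubspace ((amerFormFst7 q1).mapBase (algebraMap ℚ ℚ_[p]))
        ((amerFormSnd7 q2).mapBase (algebraMap ℚ ℚ_[p])) 3) ∧
    BothVanishOnSubspace ((amerFormFst7 q1).mapBase (algebraMap ℚ ℝ))
      ((amerFormSnd7 q2).mapBase (algebraMap ℚ ℝ)) 3 ∧
    ¬ BothVanishOnSubspace (amerFormFst7 q1) (amerFormSnd7 q2) 3 := by
  refine ⟨?_, ?_, ?_⟩
  · intro p hp'
    obtain ⟨v, hv, h1, h2⟩ := hp p
    rw [mapBase_amerFst, mapBase_amerSnd]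
    exact vanish_of_common_zero _ _ v hv h1 h2
  · obtain ⟨v, hv, h1, h2⟩ := hr
    rw [mapBase_amerFst, mapBase_amerSnd]
    exact vanish_of_common_zero _ _ v hv h1 h2
  · exact no_vanish q1 q2 hq
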